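/- Let λ be the morphism λ(1)=1234, λ(2)=2143, λ(3)=1243, λ(4)=2134 and L_t = λ^t(1). In L_t (t ≥ 1), no two λ-blocks at distance 2 are equal: for every i with 0 ≤ i ≤ 4^{t-1} - 3, the block L_t(4i+1)...L_t(4i+4) differs from the block L_t(4i+9)...L_t(4i+12). -/

import Mathlib

/-- The 4-uniform morphism `λ` on `{1,2,3,4}`, encoded as `Fin 4` via `0=1, 1=2, 2=3, 3=4`:
`λ(1)=1234, λ(2)=2143, λ(3)=1243, λ(4)=2134`. -/
def lamM : Fin 4 → List (Fin 4) :=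
  ![[0, 1, 2, 3], [1, 0, 3, 2], [0, 1, 3, 2], [1, 0, 2, 3]]

/-- The sequence `L_t = λ^t(1)`. -/
def lamL : ℕ → List (Fin 4)
  | 0 => [0]
  | t + 1 => (lamL t).flatMap lamM

lemma lamM_length (x : Fin 4) : (lamM x).length = 4 := by fin_cases x <;> rfl

lemma lamL_length (t : ℕ) : (lamL t).length = 4 ^ t := by
  induction t with
  | zero => rfl
  | succ t ih =>
    simp only [lamL, List.length_flatMap]
    simp only [Function.comp_def, lamM_length, List.map_const', List.sum_replicate,
      smul_eq_mul, ih, pow_succ]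

lemma block_eq (l : List (Fin 4)) (i : ℕ) (h : i < l.length) :
    ((l.flatMap lamM).drop (4 * i)).take 4 = lamM (l.getD i 0) := by
  induction l generalizing i with
  | nil => simp at h
  | cons x xs ih =>
    cases i with
    | zero =>
      simp only [Nat.mul_zero, List.drop_zero, List.flatMap_cons, List.getD_cons_zero]
      fin_cases x <;> rfl
    | succ n =>
      have hn : n < xs.length := by simpa using h
      have h4 : 4 * (n + 1) = (lamM x).length + 4 * n := by
        rw [lamM_length x]; ring
      rw [List.flatMap_cons, h4, List.drop_append, List.getD_cons_succ]
      rw [Nat.add_sub_cancel_left, List.drop_eq_nil_of_le (Nat.le_add_right _ _), List.nil_append]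
      exact ih n hn

lemma getD_block (l : List (Fin 4)) (q r : ℕ) (hr : r < 4) (h : 4 * q + r < l.length) :
    l.getD (4 * q + r) 0 = ((l.drop (4 * q)).take 4).getD r 0 := by
  have h1 : r < ((l.drop (4 * q)).take 4).length := by
    simp [List.length_take, List.length_drop]; omega
  rw [List.getD_eq_getElem _ _ h, List.getD_eq_getElem _ _ h1]
  simp [List.getElem_take, List.getElem_drop]

lemma parity (t q r : ℕ) (hr : r < 4) (h : 4 * q + r < 4 ^ (t + 1)) :
    ((lamL (t + 1)).getD (4 * q + r) 0 < 2 ↔ r < 2) := by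
  have hq : q < (lamL t).length := by rw [lamL_length]; rw [pow_succ] at h; omega
  have hlen : 4 * q + r < (lamL (t + 1)).length := by rw [lamL_length]; exact h
  rw [getD_block _ q r hr hlen]
  show ((((lamL t).flatMap lamM).drop (4 * q)).take 4).getD r 0 < 2 ↔ r < 2
  rw [block_eq (lamL t) q hq]
  interval_cases r <;>
    (generalize (lamL t).getD q 0 = a; fin_cases a <;> decide)

/-- In `L_t` (`t ≥ 1`), no two `λ`-blocks at distance 2 are equal: whenever the blocks at
positions `i` and `i+2` both exist (`i + 3 ≤ 4^(t-1)`), the block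
`L_t(4i+1)...L_t(4i+4)` differs from the block `L_t(4i+9)...L_t(4i+12)`. -/
theorem lamL_blocks_dist_two (t : ℕ) (ht : 1 ≤ t) (i : ℕ)
    (hi : i + 3 ≤ 4 ^ (t - 1)) :
    ((lamL t).drop (4 * i)).take 4 ≠ ((lamL t).drop (4 * i + 8)).take 4 := by
  obtain ⟨s, rfl⟩ : ∃ s, t = s + 1 := ⟨t - 1, by omega⟩
  simp only [Nat.add_sub_cancel] at hi
  cases s with
  | zero => simp at hi
  | succ s =>
    have hlen : (lamL (s + 1)).length = 4 ^ (s + 1) := lamL_length _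
    have hi1 : i < (lamL (s + 1)).length := by omega
    have hi2 : i + 2 < (lamL (s + 1)).length := by omega
    have hb1 : ((lamL (s + 1 + 1)).drop (4 * i)).take 4 = lamM ((lamL (s + 1)).getD i 0) :=
      block_eq _ i hi1
    have hb2 : ((lamL (s + 1 + 1)).drop (4 * i + 8)).take 4
        = lamM ((lamL (s + 1)).getD (i + 2) 0) := by
      have : 4 * i + 8 = 4 * (i + 2) := by ring
      rw [this]; exact block_eq _ (i + 2) hi2
    rw [hb1, hb2]
    set a := (lamL (s + 1)).getD i 0 with ha
    set b := (lamL (s + 1)).getD (i + 2) 0 with hb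
    have hpa : a < 2 ↔ i % 4 < 2 := by
      have := parity s (i / 4) (i % 4) (Nat.mod_lt _ (by norm_num))
        (by rw [Nat.div_add_mod]; omega)
      rwa [Nat.div_add_mod] at this
    have hpb : b < 2 ↔ (i + 2) % 4 < 2 := by
      have := parity s ((i + 2) / 4) ((i + 2) % 4) (Nat.mod_lt _ (by norm_num))
        (by rw [Nat.div_add_mod]; omega)
      rwa [Nat.div_add_mod] at this
    have hab : a ≠ b := by
      intro h
      have h2 : i % 4 < 2 ↔ (i + 2) % 4 < 2 := hpa.symm.trans (h ▸ hpb)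
      omega
    have hinj : Function.Injective lamM := by decide
    exact fun h => hab (hinj h)
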